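/- Let ρ > 0 and for each integer K ≥ 1 set P_B^{CD}(1)(K) = (Kρ)^K/K! divided by Σ_{j=0}^{K} (Kρ)^j/j!. If ρ ≤ 1 then P_B^{CD}(1)(K) → 0 as K → ∞; if ρ > 1 then P_B^{CD}(1)(K) → 1 − 1/ρ as K → ∞. -/

import Mathlib

open Filter

/-- The reciprocal blocking probability sum. -/
private noncomputable def cdT (ρ : ℝ) (K : ℕ) : ℝ :=
  ∑ i ∈ Finset.range (K + 1), (Nat.descFactorial K i : ℝ) / ((K : ℝ) * ρ) ^ i

private lemma cd_sum_eq (ρ : ℝ) (hρ : 0 < ρ) {K : ℕ} (hK : 1 ≤ K) :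
    ∑ j ∈ Finset.range (K + 1), ((K : ℝ) * ρ) ^ j / (Nat.factorial j : ℝ)
      = (((K : ℝ) * ρ) ^ K / (Nat.factorial K : ℝ)) * cdT ρ K := by
  have hK0 : (0:ℝ) < K := by exact_mod_cast hK
  have hx : ((K : ℝ) * ρ) ≠ 0 := by positivity
  rw [cdT, Finset.mul_sum,
    ← Finset.sum_range_reflect (fun j => ((K : ℝ) * ρ) ^ j / (Nat.factorial j : ℝ)) (K + 1)]
  refine Finset.sum_congr rfl fun i hi => ?_
  have hi' : i ≤ K := by simpa using Nat.lt_succ_iff.mp (Finset.mem_range.mp hi)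
  have hfac : ((K - i).factorial * K.descFactorial i : ℕ) = K.factorial :=
    Nat.factorial_mul_descFactorial hi'
  have hdesc0' : K.descFactorial i ≠ 0 := by
    simp only [ne_eq, Nat.descFactorial_eq_zero_iff_lt]; omega
  have hdesc0 : (K.descFactorial i : ℝ) ≠ 0 := by exact_mod_cast hdesc0'
  have hpow : ((K : ℝ) * ρ) ^ (K - i) * ((K : ℝ) * ρ) ^ i = ((K : ℝ) * ρ) ^ K := by
    rw [← pow_add, Nat.sub_add_cancel hi']
  have hfacR : ((K - i).factorial : ℝ) * (K.descFactorial i : ℝ) = (K.factorial : ℝ) := by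
    exact_mod_cast hfac
  simp only [Nat.add_sub_cancel]
  field_simp
  rw [show ((K:ℝ)*ρ)^(K-i) * (K.factorial:ℝ) * ((K:ℝ)*ρ)^i
      = (((K:ℝ)*ρ)^(K-i) * ((K:ℝ)*ρ)^i) * (K.factorial:ℝ) from by ring, hpow, ← hfacR]
  ring

private lemma cdT_term_nonneg (ρ : ℝ) (hρ : 0 < ρ) (K i : ℕ) :
    0 ≤ (Nat.descFactorial K i : ℝ) / ((K : ℝ) * ρ) ^ i := by positivity

private lemma cdT_term_le (ρ : ℝ) (hρ : 0 < ρ) {K : ℕ} (hK : 1 ≤ K) (i : ℕ) :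
    (Nat.descFactorial K i : ℝ) / ((K : ℝ) * ρ) ^ i ≤ (1 / ρ) ^ i := by
  have hK0 : (0:ℝ) < K := by exact_mod_cast hK
  have h1 : (Nat.descFactorial K i : ℝ) ≤ (K : ℝ) ^ i := by
    exact_mod_cast Nat.descFactorial_le_pow K i
  have h2 : (Nat.descFactorial K i : ℝ) / ((K : ℝ) * ρ) ^ i
      ≤ (K : ℝ) ^ i / ((K : ℝ) * ρ) ^ i := by
    gcongr
  refine h2.trans_eq ?_
  rw [← div_pow]
  congr 1
  field_simp

private lemma cdT_term_ge (ρ : ℝ) (hρ : 0 < ρ) {K i : ℕ} (hK : 1 ≤ K) (hi : i ≤ K) :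
    (1 - (i : ℝ) ^ 2 / K) * (1 / ρ) ^ i
      ≤ (Nat.descFactorial K i : ℝ) / ((K : ℝ) * ρ) ^ i := by
  have hK0 : (0:ℝ) < K := by exact_mod_cast hK
  have hiK : (i : ℝ) ≤ K := by exact_mod_cast hi
  have h1 : ((K - i : ℕ) : ℝ) ^ i ≤ (Nat.descFactorial K i : ℝ) := by
    exact_mod_cast (Nat.pow_le_pow_left (by omega) i).trans (Nat.pow_sub_le_descFactorial K i)
  have hcast : ((K - i : ℕ) : ℝ) = (K : ℝ) - i := Nat.cast_sub hi
  have hfrac : ((K : ℝ) - i) ^ i / ((K : ℝ) * ρ) ^ i = (1 - (i:ℝ)/K) ^ i * (1 / ρ) ^ i := by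
    rw [← mul_pow, ← div_pow]
    congr 1
    field_simp
  have hbern : 1 - (i : ℝ) ^ 2 / K ≤ (1 - (i:ℝ)/K) ^ i := by
    have := one_add_mul_le_pow (a := -((i:ℝ)/K)) (by
      have : (i:ℝ)/K ≤ 1 := by rw [div_le_one hK0]; exact hiK
      linarith) i
    calc 1 - (i : ℝ) ^ 2 / K = 1 + (i:ℝ) * -((i:ℝ)/K) := by ring
      _ ≤ (1 + -((i:ℝ)/K)) ^ i := this
      _ = (1 - (i:ℝ)/K) ^ i := by rw [← sub_eq_add_neg]
  calc (1 - (i : ℝ) ^ 2 / K) * (1 / ρ) ^ i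
      ≤ (1 - (i:ℝ)/K) ^ i * (1 / ρ) ^ i := by
        apply mul_le_mul_of_nonneg_right hbern (by positivity)
    _ = ((K : ℝ) - i) ^ i / ((K : ℝ) * ρ) ^ i := hfrac.symm
    _ ≤ (Nat.descFactorial K i : ℝ) / ((K : ℝ) * ρ) ^ i := by
        rw [← hcast]; gcongr

private lemma cdT_pos (ρ : ℝ) (hρ : 0 < ρ) {K : ℕ} (hK : 1 ≤ K) : 0 < cdT ρ K := by
  have h0 : (1:ℝ) ≤ cdT ρ K := by
    have : (Nat.descFactorial K 0 : ℝ) / ((K : ℝ) * ρ) ^ 0 = 1 := by simp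
    calc (1:ℝ) = (Nat.descFactorial K 0 : ℝ) / ((K : ℝ) * ρ) ^ 0 := this.symm
      _ ≤ cdT ρ K := Finset.single_le_sum (fun i _ => cdT_term_nonneg ρ hρ K i)
          (Finset.mem_range.mpr (Nat.succ_pos K))
  linarith

private lemma cd_B_eq (ρ : ℝ) (hρ : 0 < ρ) {K : ℕ} (hK : 1 ≤ K) :
    (((K : ℝ) * ρ) ^ K / (Nat.factorial K : ℝ))
      / ∑ j ∈ Finset.range (K + 1), ((K : ℝ) * ρ) ^ j / (Nat.factorial j : ℝ)
      = (cdT ρ K)⁻¹ := by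
  have hK0 : (0:ℝ) < K := by exact_mod_cast hK
  have ha : (0:ℝ) < ((K : ℝ) * ρ) ^ K / (Nat.factorial K : ℝ) := by positivity
  rw [cd_sum_eq ρ hρ hK, div_mul_cancel_left₀ ha.ne']

theorem cd_blocking_limit (ρ : ℝ) (hρ : 0 < ρ) :
    (ρ ≤ 1 → Tendsto (fun K : ℕ =>
        (((K : ℝ) * ρ) ^ K / (Nat.factorial K : ℝ))
          / ∑ j ∈ Finset.range (K + 1), ((K : ℝ) * ρ) ^ j / (Nat.factorial j : ℝ))
        atTop (nhds 0))
    ∧ (1 < ρ → Tendsto (fun K : ℕ =>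
        (((K : ℝ) * ρ) ^ K / (Nat.factorial K : ℝ))
          / ∑ j ∈ Finset.range (K + 1), ((K : ℝ) * ρ) ^ j / (Nat.factorial j : ℝ))
        atTop (nhds (1 - 1 / ρ))) := by
  set B : ℕ → ℝ := fun K =>
      (((K : ℝ) * ρ) ^ K / (Nat.factorial K : ℝ))
        / ∑ j ∈ Finset.range (K + 1), ((K : ℝ) * ρ) ^ j / (Nat.factorial j : ℝ) with hB
  have hBeq : ∀ K : ℕ, 1 ≤ K → B K = (cdT ρ K)⁻¹ := fun K hK => cd_B_eq ρ hρ hK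
  constructor
  · -- case ρ ≤ 1
    intro hρ1
    have hge : ∀ K : ℕ, 1 ≤ K → ((Nat.sqrt (K / 2) : ℝ) + 1) / 2 ≤ cdT ρ K := by
      intro K hK
      set m := Nat.sqrt (K / 2) with hm
      have hmK : m ≤ K := (Nat.sqrt_le_self _).trans (Nat.div_le_self _ _)
      have hterm : ∀ i ∈ Finset.range (m + 1),
          (1:ℝ)/2 ≤ (Nat.descFactorial K i : ℝ) / ((K : ℝ) * ρ) ^ i := by
        intro i hi
        have him : i ≤ m := Nat.lt_succ_iff.mp (Finset.mem_range.mp hi)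
        have hiK : i ≤ K := him.trans hmK
        have hK0 : (0:ℝ) < K := by exact_mod_cast hK
        have hsq : (i:ℝ) ^ 2 / K ≤ 1/2 := by
          have h1 : i * i ≤ K / 2 := Nat.le_sqrt.mp him
          have h2 : ((i * i : ℕ) : ℝ) ≤ ((K / 2 : ℕ) : ℝ) := by exact_mod_cast h1
          have h3 : ((K / 2 : ℕ) : ℝ) ≤ (K : ℝ) / 2 := Nat.cast_div_le
          have : (i:ℝ) ^ 2 ≤ (K:ℝ)/2 := by push_cast at h2 ⊢; nlinarith
          rw [div_le_div_iff₀ hK0 (by norm_num)]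
          nlinarith
        have hrpow : (1:ℝ) ≤ (1/ρ) ^ i := one_le_pow₀ (by
          rw [le_div_iff₀ hρ]; linarith)
        calc (1:ℝ)/2 = (1/2) * 1 := by ring
          _ ≤ (1 - (i:ℝ)^2/K) * (1/ρ)^i := by
              apply mul_le_mul (by linarith) hrpow one_pos.le (by linarith)
          _ ≤ _ := cdT_term_ge ρ hρ hK hiK
      calc ((m : ℝ) + 1) / 2 = (m + 1) • ((1:ℝ)/2) := by
            rw [nsmul_eq_mul]; push_cast; ring
        _ ≤ ∑ i ∈ Finset.range (m + 1),
              (Nat.descFactorial K i : ℝ) / ((K : ℝ) * ρ) ^ i := by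
            simpa using Finset.card_nsmul_le_sum _ _ _ hterm
        _ ≤ cdT ρ K := Finset.sum_le_sum_of_subset_of_nonneg
            (Finset.range_subset_range.mpr (by omega))
            (fun i _ _ => cdT_term_nonneg ρ hρ K i)
    have hup : ∀ᶠ K : ℕ in atTop, B K ≤ 2 / ((Nat.sqrt (K / 2) : ℝ) + 1) := by
      filter_upwards [eventually_ge_atTop 1] with K hK
      rw [hBeq K hK]
      have h1 : (0:ℝ) < ((Nat.sqrt (K / 2) : ℝ) + 1) / 2 := by positivity
      have := inv_anti₀ h1 (hge K hK)
      calc (cdT ρ K)⁻¹ ≤ (((Nat.sqrt (K / 2) : ℝ) + 1) / 2)⁻¹ := this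
        _ = 2 / ((Nat.sqrt (K / 2) : ℝ) + 1) := by rw [inv_div]
    have hlow : ∀ᶠ K : ℕ in atTop, (0:ℝ) ≤ B K := by
      filter_upwards [eventually_ge_atTop 1] with K hK
      rw [hBeq K hK]
      exact inv_nonneg.mpr (cdT_pos ρ hρ hK).le
    have hsqrt : Tendsto (fun K : ℕ => Nat.sqrt (K / 2)) atTop atTop := by
      apply tendsto_atTop_atTop.mpr
      intro b
      refine ⟨2 * (b * b), fun K hK => ?_⟩
      rw [Nat.le_sqrt]
      omega
    have hden : Tendsto (fun K : ℕ => (Nat.sqrt (K / 2) : ℝ) + 1) atTop atTop :=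
      tendsto_atTop_add_const_right _ 1 (tendsto_natCast_atTop_atTop.comp hsqrt)
    have hg : Tendsto (fun K : ℕ => 2 / ((Nat.sqrt (K / 2) : ℝ) + 1)) atTop (nhds 0) :=
      Tendsto.div_atTop tendsto_const_nhds hden
    exact tendsto_of_tendsto_of_tendsto_of_le_of_le' tendsto_const_nhds hg hlow hup
  · -- case 1 < ρ
    intro hρ1
    set r : ℝ := 1 / ρ with hr
    have hr0 : 0 ≤ r := by positivity
    have hr1 : r < 1 := by rw [hr, div_lt_one hρ]; exact hρ1
    have hsummable : Summable (fun i : ℕ => (i : ℝ) ^ 2 * r ^ i) :=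
      summable_pow_mul_geometric_of_norm_lt_one 2 (by
        rw [Real.norm_eq_abs, abs_of_nonneg hr0]; exact hr1)
    set C : ℝ := ∑' i : ℕ, (i : ℝ) ^ 2 * r ^ i with hC
    set G : ℕ → ℝ := fun K => ∑ i ∈ Finset.range (K + 1), r ^ i with hG
    have hGt : Tendsto G atTop (nhds (1 - r)⁻¹) := by
      have := (hasSum_geometric_of_lt_one hr0 hr1).tendsto_sum_nat
      exact (tendsto_add_atTop_iff_nat 1).mpr this
    have hupper : ∀ᶠ K : ℕ in atTop, cdT ρ K ≤ G K := by
      filter_upwards [eventually_ge_atTop 1] with K hK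
      exact Finset.sum_le_sum fun i _ => cdT_term_le ρ hρ hK i
    have hlower : ∀ᶠ K : ℕ in atTop, G K - C / K ≤ cdT ρ K := by
      filter_upwards [eventually_ge_atTop 1] with K hK
      have hK0 : (0:ℝ) < K := by exact_mod_cast hK
      have h1 : ∑ i ∈ Finset.range (K + 1), ((i:ℝ)^2 * r ^ i) ≤ C :=
        Summable.sum_le_tsum _ (fun i _ => by positivity) hsummable
      have h2 : G K - (∑ i ∈ Finset.range (K + 1), (i:ℝ)^2 * r ^ i) / K ≤ cdT ρ K := by
        rw [hG, Finset.sum_div, ← Finset.sum_sub_distrib]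
        apply Finset.sum_le_sum
        intro i hi
        have hiK : i ≤ K := Nat.lt_succ_iff.mp (Finset.mem_range.mp hi)
        have := cdT_term_ge ρ hρ hK hiK
        calc r ^ i - (i:ℝ)^2 * r ^ i / K = (1 - (i:ℝ)^2 / K) * r ^ i := by
              field_simp
          _ ≤ _ := this
      calc G K - C / K ≤ G K - (∑ i ∈ Finset.range (K + 1), (i:ℝ)^2 * r ^ i) / K := by
            gcongr
        _ ≤ cdT ρ K := h2
    have hLt : Tendsto (fun K : ℕ => G K - C / K) atTop (nhds (1 - r)⁻¹) := by
      have := hGt.sub (tendsto_const_div_atTop_nhds_zero_nat C)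
      simpa using this
    have hTt : Tendsto (cdT ρ) atTop (nhds (1 - r)⁻¹) :=
      tendsto_of_tendsto_of_tendsto_of_le_of_le' hLt hGt hlower hupper
    have hne : (1 - r)⁻¹ ≠ 0 := by
      apply inv_ne_zero; linarith
    have hinv : Tendsto (fun K => (cdT ρ K)⁻¹) atTop (nhds (1 - r)) := by
      have := hTt.inv₀ hne
      simpa [inv_inv] using this
    apply hinv.congr'
    filter_upwards [eventually_ge_atTop 1] with K hK
    exact (hBeq K hK).symm
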